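/- Let d be a positive integer, G a finite group, F a topologically transitive GCA on G^{Z^d}, and let μ be the Haar probability measure on the compact topological group G^{Z^d} (equivalently, the infinite product over Z^d of the uniform probability measure on G), defined on the Borel σ-algebra. Then F preserves μ and F is ergodically strongly mixing: for all Borel sets A, B ⊆ G^{Z^d}, the sequence μ(F^{-n}(A) ∩ B) converges to μ(A)·μ(B) as n → ∞. -/

import Mathlib

open MeasureTheory Filter

/-- A self-map `T` of a topological space `X` is topologically transitive if for all
nonempty open sets `U, V ⊆ X` there exists `n ≥ 0` with `T^n(U) ∩ V ≠ ∅`. -/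
def TopologicallyTransitive {X : Type*} [TopologicalSpace X] (T : X → X) : Prop :=
  ∀ U V : Set X, IsOpen U → IsOpen V → U.Nonempty → V.Nonempty →
    ∃ n : ℕ, (T^[n] '' U ∩ V).Nonempty

open Function
open scoped ENNReal

set_option linter.unusedSectionVars false
set_option linter.unusedVariables false

section Aux

lemma GCA_F_one {X : Type*} [Group X] (F : X → X)
    (hFm : ∀ a b, F (a * b) = F a * F b) : F 1 = 1 := by
  have h := hFm 1 1
  rw [mul_one] at h
  exact mul_eq_right.mp h.symm

/-- Iterates of a multiplicative self-map, as a monoid hom. -/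
def iterHom {X : Type*} [Group X] (F : X → X)
    (hFm : ∀ a b, F (a * b) = F a * F b) (n : ℕ) : X →* X where
  toFun := F^[n]
  map_one' := by
    show F^[n] 1 = 1
    induction n with
    | zero => rfl
    | succ n ih => rw [Function.iterate_succ_apply', ih, GCA_F_one F hFm]
  map_mul' a b := by
    show F^[n] (a * b) = F^[n] a * F^[n] b
    induction n with
    | zero => rfl
    | succ n ih =>
        rw [Function.iterate_succ_apply', Function.iterate_succ_apply',
          Function.iterate_succ_apply', ih, hFm]

lemma iterHom_coe {X : Type*} [Group X] (F : X → X)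
    (hFm : ∀ a b, F (a * b) = F a * F b) (n : ℕ) : ⇑(iterHom F hFm n) = F^[n] := rfl

/-- restriction to a finite window, as a monoid hom -/
def GCAres {ι G : Type*} [Group G] (E : Finset ι) : (ι → G) →* (E → G) where
  toFun x i := x i.1
  map_one' := rfl
  map_mul' _ _ := rfl

lemma GCAres_surj {ι G : Type*} [Group G] (E : Finset ι) :
    Surjective (GCAres (ι := ι) (G := G) E) := by
  classical
  intro g
  refine ⟨fun i => if h : i ∈ E then g ⟨i, h⟩ else 1, ?_⟩
  funext i
  simp [GCAres, i.2]

lemma GCAres_cont {ι G : Type*} [Group G] [TopologicalSpace G] (E : Finset ι) :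
    Continuous (GCAres (ι := ι) (G := G) E) :=
  continuous_pi fun _ => continuous_apply _

end Aux

section Haar

variable {X : Type*} [Group X] [MeasurableSpace X] [MeasurableMul X]
  (μ : Measure X) [IsProbabilityMeasure μ] [μ.IsMulLeftInvariant]

lemma haar_fiber {K : Type*} [Group K] [Finite K] (φ : X →* K)
    (hmeas : ∀ k : K, MeasurableSet (φ ⁻¹' {k})) (hsurj : Surjective φ) (k : K) :
    μ (φ ⁻¹' {k}) = (Nat.card K : ℝ≥0∞)⁻¹ := by
  classical
  haveI : Fintype K := Fintype.ofFinite K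
  have heq : ∀ k : K, μ (φ ⁻¹' {k}) = μ (φ ⁻¹' {1}) := by
    intro k
    obtain ⟨x₀, hx₀⟩ := hsurj k⁻¹
    have hset : φ ⁻¹' {k} = (fun x => x₀ * x) ⁻¹' (φ ⁻¹' {1}) := by
      ext x
      simp only [Set.mem_preimage, Set.mem_singleton_iff, map_mul, hx₀]
      constructor
      · intro h; rw [h, inv_mul_cancel]
      · intro h
        have := congrArg (fun y => k * y) h
        simp only [← mul_assoc, mul_inv_cancel, one_mul, mul_one] at this
        exact this
    rw [hset, measure_preimage_mul]
  have hdisj : Pairwise (Function.onFun Disjoint fun k : K => φ ⁻¹' {k}) := by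
    intro a b hab
    rw [Function.onFun, Set.disjoint_left]
    rintro x hxa hxb
    exact hab (by rw [← hxa, ← hxb])
  have hiU : (⋃ k : K, φ ⁻¹' {k}) = Set.univ := by
    ext x; simp
  have hsum : (Fintype.card K : ℝ≥0∞) * μ (φ ⁻¹' {1}) = 1 := by
    have h1 := measure_iUnion (μ := μ) hdisj hmeas
    rw [hiU, measure_univ, tsum_fintype] at h1
    have h2 : ∀ k : K, μ (φ ⁻¹' {k}) = μ (φ ⁻¹' {1}) := heq
    rw [Finset.sum_congr rfl (fun k _ => h2 k), Finset.sum_const, nsmul_eq_mul] at h1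
    simpa using h1.symm
  have hcard0 : (Nat.card K : ℝ≥0∞) ≠ 0 := by
    simp [Nat.card_eq_fintype_card, Fintype.card_ne_zero]
  have hcardt : (Nat.card K : ℝ≥0∞) ≠ ⊤ := ENNReal.natCast_ne_top _
  rw [heq k]
  rw [Nat.card_eq_fintype_card] at hcard0 hcardt ⊢
  calc μ (φ ⁻¹' {1}) = ((Fintype.card K : ℝ≥0∞)⁻¹ * (Fintype.card K)) * μ (φ ⁻¹' {1}) := by
        rw [ENNReal.inv_mul_cancel hcard0 hcardt, one_mul]
    _ = (Fintype.card K : ℝ≥0∞)⁻¹ * ((Fintype.card K) * μ (φ ⁻¹' {1})) := by ring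
    _ = (Fintype.card K : ℝ≥0∞)⁻¹ := by rw [hsum, mul_one]

lemma haar_preimage {K : Type*} [Group K] [Finite K] (φ : X →* K)
    (hmeas : ∀ k : K, MeasurableSet (φ ⁻¹' {k})) (hsurj : Surjective φ) (T : Set K) :
    μ (φ ⁻¹' T) = (Nat.card ↥T : ℝ≥0∞) * (Nat.card K : ℝ≥0∞)⁻¹ := by
  classical
  haveI : Fintype K := Fintype.ofFinite K
  have hsplit : φ ⁻¹' T = ⋃ k ∈ T.toFinset, φ ⁻¹' {k} := by
    ext x; simp
  have hdisj : (↑T.toFinset : Set K).PairwiseDisjoint fun k : K => φ ⁻¹' {k} := by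
    intro a _ b _ hab
    rw [Function.onFun, Set.disjoint_left]
    rintro x hxa hxb
    exact hab (by rw [← hxa, ← hxb])
  rw [hsplit, measure_biUnion_finset hdisj (fun k _ => hmeas k)]
  rw [Finset.sum_congr rfl (fun k _ => haar_fiber μ φ hmeas hsurj k), Finset.sum_const,
    nsmul_eq_mul, Set.toFinset_card, Nat.card_eq_fintype_card, Nat.card_coe_set_eq,
    Set.ncard_eq_toFinset_card', Set.toFinset_card]

lemma haar_pair {K₁ K₂ : Type*} [Group K₁] [Group K₂] [Finite K₁] [Finite K₂]
    (φ₁ : X →* K₁) (φ₂ : X →* K₂)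
    (hm1 : ∀ k, MeasurableSet (φ₁ ⁻¹' {k})) (hm2 : ∀ k, MeasurableSet (φ₂ ⁻¹' {k}))
    (hs : Surjective fun x => (φ₁ x, φ₂ x)) (T₁ : Set K₁) (T₂ : Set K₂) :
    μ (φ₁ ⁻¹' T₁ ∩ φ₂ ⁻¹' T₂) = μ (φ₁ ⁻¹' T₁) * μ (φ₂ ⁻¹' T₂) := by
  classical
  have hs1 : Surjective φ₁ := by
    intro k
    obtain ⟨x, hx⟩ := hs (k, 1)
    exact ⟨x, congrArg Prod.fst hx⟩
  have hs2 : Surjective φ₂ := by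
    intro k
    obtain ⟨x, hx⟩ := hs (1, k)
    exact ⟨x, congrArg Prod.snd hx⟩
  set φ : X →* K₁ × K₂ := φ₁.prod φ₂ with hφ
  have hsφ : Surjective φ := hs
  have hmp : ∀ k : K₁ × K₂, MeasurableSet (φ ⁻¹' {k}) := by
    rintro ⟨k₁, k₂⟩
    have : φ ⁻¹' {(k₁, k₂)} = φ₁ ⁻¹' {k₁} ∩ φ₂ ⁻¹' {k₂} := by
      ext x
      simp [hφ, MonoidHom.prod_apply, Prod.ext_iff]
    rw [this]; exact (hm1 _).inter (hm2 _)
  have hinter : φ₁ ⁻¹' T₁ ∩ φ₂ ⁻¹' T₂ = φ ⁻¹' (T₁ ×ˢ T₂) := by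
    ext x
    simp [hφ, MonoidHom.prod_apply, Set.mem_prod]
  rw [hinter, haar_preimage μ φ hmp hsφ, haar_preimage μ φ₁ hm1 hs1,
    haar_preimage μ φ₂ hm2 hs2]
  have hc : (Nat.card ↥(T₁ ×ˢ T₂) : ℝ≥0∞)
      = (Nat.card ↥T₁ : ℝ≥0∞) * (Nat.card ↥T₂ : ℝ≥0∞) := by
    rw [Nat.card_congr (Equiv.Set.prod T₁ T₂), Nat.card_prod]
    push_cast; ring
  have hK : ((Nat.card (K₁ × K₂) : ℝ≥0∞))⁻¹
      = (Nat.card K₁ : ℝ≥0∞)⁻¹ * (Nat.card K₂ : ℝ≥0∞)⁻¹ := by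
    rw [Nat.card_prod]
    push_cast
    rw [ENNReal.mul_inv]
    · left; simp [Nat.card_pos.ne']
    · left; exact ENNReal.natCast_ne_top _
  rw [hc, hK]; ring

end Haar

section Goursat

variable {X : Type*} [Group X] [TopologicalSpace X]
  {K₁ K₂ : Type*} [Group K₁] [Group K₂] [Finite K₁] [Finite K₂]

lemma goursat_key (F : X → X) (hFc : Continuous F)
    (hFm : ∀ a b, F (a * b) = F a * F b) (hFtrans : TopologicallyTransitive F)
    (hFsurj : Surjective F) (π₁ : X →* K₁) (π₂ : X →* K₂)
    (h₁o : ∀ W : Set K₁, IsOpen (π₁ ⁻¹' W)) (h₁s : Surjective π₁) (h₂s : Surjective π₂)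
    (m m' : ℕ) (hlt : m < m')
    (hRR : ((π₁.comp (iterHom F hFm m)).prod π₂).range
          = ((π₁.comp (iterHom F hFm m')).prod π₂).range)
    (hRne : ((π₁.comp (iterHom F hFm m)).prod π₂).range ≠ ⊤) : False := by
  classical
  set R : Subgroup (K₁ × K₂) := ((π₁.comp (iterHom F hFm m)).prod π₂).range with hRdef
  set c : X → K₁ := fun x => π₁ (F^[m] x) with hc
  have hmemR : ∀ x : X, (c x, π₂ x) ∈ R := fun x => ⟨x, rfl⟩
  have hmemR' : ∀ x : X, (π₁ (F^[m'] x), π₂ x) ∈ R := by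
    intro x
    have h2 : (π₁ (F^[m'] x), π₂ x) ∈ ((π₁.comp (iterHom F hFm m')).prod π₂).range :=
      ⟨x, rfl⟩
    rwa [← hRR] at h2
  set M : Subgroup K₁ := R.comap (MonoidHom.inl K₁ K₂) with hM
  have hMmem : ∀ a : K₁, a ∈ M ↔ (a, (1 : K₂)) ∈ R := fun a => Iff.rfl
  have hcs : Surjective c := fun a => h₁s.comp (hFsurj.iterate m) a
  have hfst : ∀ a : K₁, ∃ b, (a, b) ∈ R := by
    intro a
    obtain ⟨x, hx⟩ := hcs a
    exact ⟨π₂ x, by rw [← hx]; exact hmemR x⟩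
  haveI hMnormal : M.Normal := by
    constructor
    intro g hg h
    obtain ⟨b, hb⟩ := hfst h
    have hmul := R.mul_mem hb (R.mul_mem ((hMmem g).mp hg) (R.inv_mem hb))
    have heq : (h, b) * ((g, (1 : K₂)) * (h, b)⁻¹) = (h * g * h⁻¹, (1 : K₂)) := by
      simp [Prod.ext_iff, mul_assoc]
    rw [heq] at hmul
    exact (hMmem _).mpr hmul
  have hMne : M ≠ ⊤ := by
    intro htop
    apply hRne
    rw [Subgroup.eq_top_iff']
    rintro ⟨a, b⟩
    obtain ⟨x, hx⟩ := h₂s b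
    have h1 : (c x, b) ∈ R := by rw [← hx]; exact hmemR x
    have h2 : (a * (c x)⁻¹, (1 : K₂)) ∈ R :=
      (hMmem _).mp (htop ▸ Subgroup.mem_top (a * (c x)⁻¹))
    have h3 := R.mul_mem h2 h1
    have heq : ((a * (c x)⁻¹, (1 : K₂)) * (c x, b)) = (a, b) := by
      simp [Prod.ext_iff, mul_assoc]
    rwa [heq] at h3
  set p := m' - m with hp
  have hppos : 0 < p := by omega
  set ψ : X → K₁ ⧸ M := fun x => QuotientGroup.mk (c x) with hψ
  have hmemM : ∀ x : X, (c x)⁻¹ * c (F^[p] x) ∈ M := by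
    intro x
    have h2 : (c (F^[p] x), π₂ x) ∈ R := by
      have hiter : F^[m] (F^[p] x) = F^[m'] x := by
        rw [← Function.iterate_add_apply]
        congr 1
        omega
      have := hmemR' x
      rw [← hiter] at this
      exact this
    have h3 := R.mul_mem (R.inv_mem (hmemR x)) h2
    have heq : ((c x, π₂ x)⁻¹ * (c (F^[p] x), π₂ x))
        = ((c x)⁻¹ * c (F^[p] x), ((π₂ x)⁻¹ * π₂ x : K₂)) := rfl
    rw [heq, inv_mul_cancel] at h3
    exact (hMmem _).mpr h3
  have hper : ∀ x, ψ (F^[p] x) = ψ x := by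
    intro x
    refine (QuotientGroup.eq.mpr ?_)
    simpa [mul_inv_rev] using M.inv_mem (hmemM x)
  have hiterp : ∀ (k : ℕ) (x : X), ψ (F^[k * p] x) = ψ x := by
    intro k
    induction k with
    | zero => intro x; simp
    | succ k ih =>
        intro x
        have hkp : (k + 1) * p = p + k * p := by ring
        rw [hkp, Function.iterate_add_apply, hper, ih]
  have hmod : ∀ (n : ℕ) (x : X), ψ (F^[n] x) = ψ (F^[n % p] x) := by
    intro n x
    have h1 : n = n / p * p + n % p := by
      rw [Nat.mul_comm, Nat.div_add_mod]
    conv_lhs => rw [h1]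
    rw [Function.iterate_add_apply, hiterp]
  obtain ⟨a₀, ha₀⟩ : ∃ a, a ∉ M := by
    by_contra h
    push_neg at h
    exact hMne ((Subgroup.eq_top_iff' M).mpr h)
  obtain ⟨x₀, hx₀⟩ := hcs a₀
  have hψx₀ : ψ x₀ ≠ 1 := by
    intro h
    apply ha₀
    rw [← hx₀]
    exact (QuotientGroup.eq_one_iff (c x₀)).mp h
  have hψpre : ∀ (n : ℕ) (q : K₁ ⧸ M), IsOpen {x : X | ψ (F^[n] x) = q} := by
    intro n q
    have hset : {x : X | ψ (F^[n] x) = q}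
        = F^[n + m] ⁻¹' (π₁ ⁻¹' {a : K₁ | (QuotientGroup.mk a : K₁ ⧸ M) = q}) := by
      ext x
      simp only [Set.mem_setOf_eq, Set.mem_preimage, hψ, hc]
      rw [Nat.add_comm, Function.iterate_add_apply]
    rw [hset]
    exact (hFc.iterate _).isOpen_preimage _ (h₁o _)
  set U : Set X := ⋂ r ∈ Finset.range p, {x : X | ψ (F^[r] x) = 1} with hU
  have hUopen : IsOpen U := isOpen_biInter_finset fun r _ => hψpre r 1
  have hUne : (1 : X) ∈ U := by
    rw [hU]
    simp only [Set.mem_iInter, Set.mem_setOf_eq]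
    intro r _
    have h1 : F^[r] (1 : X) = 1 := map_one (iterHom F hFm r)
    have h2 : c (1 : X) = 1 := by
      show π₁ (F^[m] (1 : X)) = 1
      have h3 : F^[m] (1 : X) = 1 := map_one (iterHom F hFm m)
      rw [h3]
      exact map_one π₁
    rw [h1]
    show (QuotientGroup.mk (c (1:X)) : K₁ ⧸ M) = 1
    rw [h2]
    exact (QuotientGroup.eq_one_iff _).mpr M.one_mem
  set V : Set X := {x : X | ψ x = ψ x₀} with hV
  have hVopen : IsOpen V := by
    have := hψpre 0 (ψ x₀)
    simpa using this
  obtain ⟨n, z, hzmem⟩ := hFtrans U V hUopen hVopen ⟨1, hUne⟩ ⟨x₀, rfl⟩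
  obtain ⟨⟨y, hyU, rfl⟩, hzV⟩ := hzmem
  have h1 : ψ (F^[n] y) = 1 := by
    rw [hmod n y]
    have hr : n % p ∈ Finset.range p := Finset.mem_range.mpr (Nat.mod_lt _ hppos)
    have := Set.mem_iInter₂.mp hyU (n % p) hr
    exact this
  exact hψx₀ (hzV.symm.trans h1)

lemma eventually_pair_surjective (F : X → X) (hFc : Continuous F)
    (hFm : ∀ a b, F (a * b) = F a * F b) (hFtrans : TopologicallyTransitive F)
    (hFsurj : Surjective F) (π₁ : X →* K₁) (π₂ : X →* K₂)
    (h₁o : ∀ W : Set K₁, IsOpen (π₁ ⁻¹' W)) (h₁s : Surjective π₁) (h₂s : Surjective π₂) :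
    ∃ N : ℕ, ∀ n ≥ N, Surjective fun x => (π₁ (F^[n] x), π₂ x) := by
  classical
  by_contra hcon
  push_neg at hcon
  set H : ℕ → (X →* K₁ × K₂) := fun n => (π₁.comp (iterHom F hFm n)).prod π₂ with hH
  have hBadInf : {n : ℕ | ¬ Surjective ⇑(H n)}.Infinite := by
    apply Set.infinite_of_not_bddAbove
    rintro ⟨b, hb⟩
    obtain ⟨n, hnb, hn⟩ := hcon (b + 1)
    have hnBad : n ∈ {n : ℕ | ¬ Surjective ⇑(H n)} := hn
    have := hb hnBad
    omega
  haveI : Finite (Subgroup (K₁ × K₂)) :=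
    Finite.of_injective (fun s : Subgroup (K₁ × K₂) => (s : Set (K₁ × K₂)))
      SetLike.coe_injective
  obtain ⟨a, ha, b, hb, hab, hRab⟩ :=
    hBadInf.exists_ne_map_eq_of_mapsTo (f := fun n => (H n).range)
      (Set.mapsTo_univ _ _) Set.finite_univ
  have hnetop : ∀ n, n ∈ {n : ℕ | ¬ Surjective ⇑(H n)} → (H n).range ≠ ⊤ := by
    intro n hn htop
    exact hn (MonoidHom.range_eq_top.mp htop)
  rcases hab.lt_or_gt with h | h
  · exact goursat_key F hFc hFm hFtrans hFsurj π₁ π₂ h₁o h₁s h₂s a b h hRab (hnetop a ha)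
  · exact goursat_key F hFc hFm hFtrans hFsurj π₁ π₂ h₁o h₁s h₂s b a h hRab.symm (hnetop b hb)

end Goursat

section Approx

lemma cyl_approx {ι G : Type*} [Group G] [Finite G] [TopologicalSpace G] [DiscreteTopology G]
    [MeasurableSpace (ι → G)] (μ : Measure (ι → G)) [IsProbabilityMeasure μ]
    [μ.OuterRegular] {A : Set (ι → G)} (hA : MeasurableSet A) {δ : ℝ≥0∞} (hδ : 0 < δ) :
    ∃ (E : Finset ι) (T : Set (E → G)),
      μ (A \ (GCAres E) ⁻¹' T) ≤ δ ∧ μ ((GCAres E) ⁻¹' T \ A) ≤ δ := by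
  classical
  obtain ⟨U, hAU, hUopen, hUμ⟩ :=
    Set.exists_isOpen_lt_of_lt A _ (ENNReal.lt_add_right (measure_ne_top μ A) hδ.ne')
  obtain ⟨U', hAU', hU'open, hU'μ⟩ :=
    Set.exists_isOpen_lt_of_lt Aᶜ _ (ENNReal.lt_add_right (measure_ne_top μ Aᶜ) hδ.ne')
  have hUA : μ (U \ A) ≤ δ := by
    rw [measure_diff hAU hA.nullMeasurableSet (measure_ne_top μ A)]
    rw [tsub_le_iff_right, add_comm]
    exact hUμ.le
  set C : Set (ι → G) := U'ᶜ with hC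
  have hCclosed : IsClosed C := hU'open.isClosed_compl
  have hCA : C ⊆ A := by
    intro x hx
    by_contra hxA
    exact hx (hAU' hxA)
  have hCcomp : IsCompact C := hCclosed.isCompact
  have hAC : μ (A \ C) ≤ δ := by
    have hACeq : A \ C = U' \ Aᶜ := by
      ext x
      simp only [hC, Set.mem_diff, Set.mem_compl_iff, not_not]
      tauto
    rw [hACeq, measure_diff hAU' hA.compl.nullMeasurableSet (measure_ne_top μ Aᶜ)]
    rw [tsub_le_iff_right, add_comm]
    exact hU'μ.le
  have hcov : ∀ x : C, ∃ E : Finset ι, {y : ι → G | ∀ i ∈ E, y i = (x : ι → G) i} ⊆ U := by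
    rintro ⟨x, hx⟩
    obtain ⟨I, u, hIu, hpi⟩ := (isOpen_pi_iff.mp hUopen) x (hAU (hCA hx))
    refine ⟨I, fun y hy => hpi ?_⟩
    intro i hi
    rw [Set.mem_setOf_eq] at hy
    rw [hy i hi]
    exact (hIu i hi).2
  choose Ex hEx using hcov
  set W : C → Set (ι → G) := fun x => {y : ι → G | ∀ i ∈ Ex x, y i = (x : ι → G) i} with hW
  have hWopen : ∀ x, IsOpen (W x) := by
    intro x
    have : W x = ⋂ i ∈ Ex x, (fun y : ι → G => y i) ⁻¹' {(x : ι → G) i} := by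
      ext y; simp [hW]
    rw [this]
    exact isOpen_biInter_finset fun i _ =>
      (continuous_apply i).isOpen_preimage _ (isOpen_discrete _)
  have hCsub : C ⊆ ⋃ x : C, W x := by
    intro z hz
    exact Set.mem_iUnion.mpr ⟨⟨z, hz⟩, fun i _ => rfl⟩
  obtain ⟨t, ht⟩ := hCcomp.elim_finite_subcover W hWopen hCsub
  set E : Finset ι := t.sup Ex with hE
  set D : Set (ι → G) := ⋃ x ∈ t, W x with hD
  have hDU : D ⊆ U := Set.iUnion₂_subset fun x _ => hEx x
  have hCD : C ⊆ D := ht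
  set T : Set (E → G) := {g | ∃ y ∈ D, ∀ i : E, g i = y i.1} with hT
  have hDT : (GCAres E) ⁻¹' T = D := by
    ext z
    constructor
    · rintro ⟨y, hyD, hyz⟩
      obtain ⟨x, hxmem⟩ := Set.mem_iUnion.mp hyD
      obtain ⟨hxt, hyW⟩ := Set.mem_iUnion.mp hxmem
      have hzW : z ∈ W x := by
        intro i hi
        have hsub : Ex x ⊆ E := Finset.le_sup hxt
        have hiE : i ∈ E := hsub hi
        have hzi : z i = y i := hyz ⟨i, hiE⟩
        rw [hzi]
        exact hyW i hi
      exact Set.mem_biUnion hxt hzW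
    · intro hz
      exact ⟨z, hz, fun i => rfl⟩
  refine ⟨E, T, ?_, ?_⟩
  · rw [hDT]
    exact le_trans (measure_mono (Set.diff_subset_diff_right hCD)) hAC
  · rw [hDT]
    exact le_trans (measure_mono (Set.diff_subset_diff_left hDU)) hUA

end Approx

theorem stmt11 (d : ℕ) (hd : 0 < d) (G : Type*) [Group G] [Finite G]
    [TopologicalSpace G] [DiscreteTopology G]
    [MeasurableSpace ((Fin d → ℤ) → G)] [BorelSpace ((Fin d → ℤ) → G)]
    (F : ((Fin d → ℤ) → G) → ((Fin d → ℤ) → G))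
    (hFcont : Continuous F)
    (hFhom : ∀ a b : (Fin d → ℤ) → G, F (a * b) = F a * F b)
    (hFshift : ∀ (u : Fin d → ℤ) (c : (Fin d → ℤ) → G),
      F (fun v => c (v + u)) = fun v => F c (v + u))
    (hFtrans : TopologicallyTransitive F)
    (μ : Measure ((Fin d → ℤ) → G))
    (hμ : μ.IsHaarMeasure) (hμprob : IsProbabilityMeasure μ) :
    MeasurePreserving F μ μ ∧
      ∀ A B : Set ((Fin d → ℤ) → G), MeasurableSet A → MeasurableSet B →
        Tendsto (fun n : ℕ => μ (F^[n] ⁻¹' A ∩ B)) atTop (nhds (μ A * μ B)) := by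
  classical
  haveI := hμ
  haveI := hμprob
  haveI : IsTopologicalGroup G :=
    { continuous_mul := continuous_of_discreteTopology
      continuous_inv := continuous_of_discreteTopology }
  have hF1 : F 1 = 1 := GCA_F_one F hFhom
  -- surjectivity of F
  have hFsurj : Function.Surjective F := by
    by_contra hns
    rw [Function.Surjective] at hns
    push_neg at hns
    obtain ⟨z, hz⟩ := hns
    have hclosed : IsClosed (Set.range F) := (isCompact_range hFcont).isClosed
    have hz1 : z ≠ 1 := by
      intro h
      exact hz 1 (by rw [hF1, h])
    obtain ⟨Vz, U1, hVzo, hU1o, hzVz, h1U1, hdisj⟩ := t2_separation hz1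
    set V : Set ((Fin d → ℤ) → G) := Vz ∩ (Set.range F)ᶜ with hV
    have hVo : IsOpen V := hVzo.inter hclosed.isOpen_compl
    have hzV : z ∈ V := ⟨hzVz, fun hmem => by obtain ⟨x, hx⟩ := hmem; exact hz x hx⟩
    obtain ⟨n, w, hw⟩ := hFtrans U1 V hU1o hVo ⟨1, h1U1⟩ ⟨z, hzV⟩
    obtain ⟨⟨y, hyU, rfl⟩, hwV⟩ := hw
    cases n with
    | zero =>
        exact Set.disjoint_left.mp hdisj hwV.1 hyU
    | succ k =>
        apply hwV.2
        rw [Function.iterate_succ_apply']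
        exact ⟨F^[k] y, rfl⟩
  -- measure preservation
  set Fmh : ((Fin d → ℤ) → G) →* ((Fin d → ℤ) → G) := { toFun := F, map_one' := hF1, map_mul' := hFhom } with hFmh
  have hMP : MeasurePreserving F μ μ := Fmh.measurePreserving hFcont hFsurj rfl
  refine ⟨hMP, ?_⟩
  -- regularity
  haveI hreg : μ.Regular := by
    apply MeasureTheory.Measure.regular_of_isMulLeftInvariant (μ := μ)
      (K := (Set.univ : Set ((Fin d → ℤ) → G))) isCompact_univ
    · rw [interior_univ]; exact Set.univ_nonempty
    · exact measure_ne_top μ _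
  -- measurability of cylinder sets
  have hopenpre : ∀ (E : Finset (Fin d → ℤ)) (W : Set (E → G)), IsOpen ((GCAres E) ⁻¹' W) :=
    fun E W => (GCAres_cont E).isOpen_preimage _ (isOpen_discrete _)
  have hmeascyl : ∀ (E : Finset (Fin d → ℤ)) (W : Set (E → G)), MeasurableSet ((GCAres E) ⁻¹' W) :=
    fun E W => (hopenpre E W).measurableSet
  -- key uniformization
  have mix_cyl : ∀ E S : Finset (Fin d → ℤ), ∃ N : ℕ, ∀ n ≥ N,
      ∀ (TA : Set (E → G)) (TB : Set (S → G)),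
        μ (F^[n] ⁻¹' ((GCAres E) ⁻¹' TA) ∩ (GCAres S) ⁻¹' TB)
          = μ ((GCAres E) ⁻¹' TA) * μ ((GCAres S) ⁻¹' TB) := by
    intro E S
    obtain ⟨N, hN⟩ := eventually_pair_surjective F hFcont hFhom hFtrans hFsurj
      (GCAres E) (GCAres S) (hopenpre E) (GCAres_surj E) (GCAres_surj S)
    refine ⟨N, fun n hn TA TB => ?_⟩
    have hsurjn := hN n hn
    have hm1 : ∀ k, MeasurableSet (((GCAres (G := G) E).comp (iterHom F hFhom n)) ⁻¹' {k}) := by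
      intro k
      have : ((GCAres (G := G) E).comp (iterHom F hFhom n)) ⁻¹' {k}
          = F^[n] ⁻¹' ((GCAres E) ⁻¹' {k}) := rfl
      rw [this]
      exact (hmeascyl E {k}).preimage (hFcont.iterate n).measurable
    have hm2 : ∀ k, MeasurableSet ((GCAres (G := G) S) ⁻¹' {k}) := fun k => hmeascyl S {k}
    have hpair := haar_pair μ ((GCAres E).comp (iterHom F hFhom n)) (GCAres S)
      hm1 hm2 hsurjn TA TB
    have hch : (((GCAres (G := G) E).comp (iterHom F hFhom n))) ⁻¹' TA
        = F^[n] ⁻¹' ((GCAres E) ⁻¹' TA) := rfl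
    rw [hch] at hpair
    rw [hpair, (hMP.iterate n).measure_preimage (hmeascyl E TA).nullMeasurableSet]
  intro A B hA hB
  have hABfin : μ A * μ B ≠ ⊤ := ENNReal.mul_ne_top (measure_ne_top μ A) (measure_ne_top μ B)
  rw [ENNReal.tendsto_atTop hABfin]
  intro ε hε
  set δ : ℝ≥0∞ := min (ε / 5) 1 with hδdef
  have hδpos : 0 < δ := lt_min (ENNReal.div_pos hε.ne' (by norm_num)) one_pos
  have hδ1 : δ ≤ 1 := min_le_right _ _
  have hδε : 5 * δ ≤ ε := by
    calc 5 * δ ≤ 5 * (ε / 5) := by gcongr; exact min_le_left _ _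
      _ ≤ ε := ENNReal.mul_div_le
  obtain ⟨E, TA, hA1, hA2⟩ := cyl_approx μ hA hδpos
  obtain ⟨S, TB, hB1, hB2⟩ := cyl_approx μ hB hδpos
  set A' : Set ((Fin d → ℤ) → G) := (GCAres E) ⁻¹' TA with hA'
  set B' : Set ((Fin d → ℤ) → G) := (GCAres S) ⁻¹' TB with hB'
  have hA'meas : MeasurableSet A' := hmeascyl E TA
  have hB'meas : MeasurableSet B' := hmeascyl S TB
  obtain ⟨N, hN⟩ := mix_cyl E S
  refine ⟨N, fun n hn => ?_⟩
  have hprod : μ (F^[n] ⁻¹' A' ∩ B') = μ A' * μ B' := hN n hn TA TB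
  have hMPn : MeasurePreserving F^[n] μ μ := hMP.iterate n
  have hpre1 : μ (F^[n] ⁻¹' (A \ A')) = μ (A \ A') :=
    hMPn.measure_preimage (hA.diff hA'meas).nullMeasurableSet
  have hpre2 : μ (F^[n] ⁻¹' (A' \ A)) = μ (A' \ A) :=
    hMPn.measure_preimage (hA'meas.diff hA).nullMeasurableSet
  have hmeasineq : ∀ P Q R S' : Set ((Fin d → ℤ) → G), P ⊆ Q ∪ (R ∪ S') → μ P ≤ μ Q + (μ R + μ S') := by
    intro P Q R S' h
    calc μ P ≤ μ (Q ∪ (R ∪ S')) := measure_mono h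
      _ ≤ μ Q + μ (R ∪ S') := measure_union_le _ _
      _ ≤ μ Q + (μ R + μ S') := by gcongr; exact measure_union_le _ _
  have hABsub : F^[n] ⁻¹' A ∩ B ⊆ (F^[n] ⁻¹' A' ∩ B') ∪ (F^[n] ⁻¹' (A \ A') ∪ (B \ B')) := by
    rintro x ⟨hxA, hxB⟩
    by_cases h1 : F^[n] x ∈ A'
    · by_cases h2 : x ∈ B'
      · exact Or.inl ⟨h1, h2⟩
      · exact Or.inr (Or.inr ⟨hxB, h2⟩)
    · exact Or.inr (Or.inl ⟨hxA, h1⟩)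
  have hA'Bsub : F^[n] ⁻¹' A' ∩ B' ⊆ (F^[n] ⁻¹' A ∩ B) ∪ (F^[n] ⁻¹' (A' \ A) ∪ (B' \ B)) := by
    rintro x ⟨hxA, hxB⟩
    by_cases h1 : F^[n] x ∈ A
    · by_cases h2 : x ∈ B
      · exact Or.inl ⟨h1, h2⟩
      · exact Or.inr (Or.inr ⟨hxB, h2⟩)
    · exact Or.inr (Or.inl ⟨hxA, h1⟩)
  have hdiffle : ∀ P Q : Set ((Fin d → ℤ) → G), μ P ≤ μ Q + μ (P \ Q) := by
    intro P Q
    calc μ P ≤ μ (Q ∪ (P \ Q)) := by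
          apply measure_mono
          intro x hx
          by_cases h : x ∈ Q
          · exact Or.inl h
          · exact Or.inr ⟨hx, h⟩
      _ ≤ μ Q + μ (P \ Q) := measure_union_le _ _
  have hle1 : μ A ≤ μ A' + δ := le_trans (hdiffle A A') (by gcongr)
  have hle2 : μ B ≤ μ B' + δ := le_trans (hdiffle B B') (by gcongr)
  have hle3 : μ A' ≤ μ A + δ := le_trans (hdiffle A' A) (by gcongr)
  have hle4 : μ B' ≤ μ B + δ := le_trans (hdiffle B' B) (by gcongr)
  have hexp : ∀ a b : ℝ≥0∞, a ≤ 1 → b ≤ 1 → (a + δ) * (b + δ) ≤ a * b + 3 * δ := by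
    intro a b ha hb
    calc (a + δ) * (b + δ) = a * b + (a * δ + (δ * b + δ * δ)) := by ring
      _ ≤ a * b + (1 * δ + (δ * 1 + δ * 1)) := by gcongr
      _ = a * b + 3 * δ := by ring
  have hupper : μ (F^[n] ⁻¹' A ∩ B) ≤ μ A * μ B + ε := by
    calc μ (F^[n] ⁻¹' A ∩ B)
        ≤ μ (F^[n] ⁻¹' A' ∩ B') + (μ (F^[n] ⁻¹' (A \ A')) + μ (B \ B')) :=
          hmeasineq _ _ _ _ hABsub
      _ = μ A' * μ B' + (μ (A \ A') + μ (B \ B')) := by rw [hprod, hpre1]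
      _ ≤ μ A' * μ B' + (δ + δ) := by gcongr
      _ ≤ (μ A + δ) * (μ B + δ) + (δ + δ) := by gcongr
      _ ≤ (μ A * μ B + 3 * δ) + (δ + δ) :=
          add_le_add (hexp _ _ prob_le_one prob_le_one) le_rfl
      _ = μ A * μ B + 5 * δ := by ring
      _ ≤ μ A * μ B + ε := by gcongr
  have hlower : μ A * μ B ≤ μ (F^[n] ⁻¹' A ∩ B) + ε := by
    calc μ A * μ B ≤ (μ A' + δ) * (μ B' + δ) := by gcongr
      _ ≤ μ A' * μ B' + 3 * δ := hexp _ _ prob_le_one prob_le_one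
      _ = μ (F^[n] ⁻¹' A' ∩ B') + 3 * δ := by rw [hprod]
      _ ≤ (μ (F^[n] ⁻¹' A ∩ B) + (μ (F^[n] ⁻¹' (A' \ A)) + μ (B' \ B))) + 3 * δ :=
          add_le_add (hmeasineq _ _ _ _ hA'Bsub) le_rfl
      _ = (μ (F^[n] ⁻¹' A ∩ B) + (μ (A' \ A) + μ (B' \ B))) + 3 * δ := by rw [hpre2]
      _ ≤ (μ (F^[n] ⁻¹' A ∩ B) + (δ + δ)) + 3 * δ := by gcongr
      _ = μ (F^[n] ⁻¹' A ∩ B) + 5 * δ := by ring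
      _ ≤ μ (F^[n] ⁻¹' A ∩ B) + ε := by gcongr
  exact ⟨tsub_le_iff_right.mpr hlower, hupper⟩
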